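/- Let S be a finite set, and for each s ∈ S let β_s > 0, μ_s ≥ 0 with Σ_s Σ_d d·μ_{s,d} = λ_S ∈ (0,∞). Define f(x) = λ_R/λ + α_S · Σ_s Σ_d (d·μ_{s,d}/λ)·(x + (1-x)e^{-β_s})^{d-1}, where λ = λ_S + λ_I + λ_R with λ_I > 0 and α_S > 0. Then f has a unique fixed point x* in the open interval (0,1). -/

import Mathlib

theorem stmt_0 {S : Type*} [Fintype S]
    (β : S → ℝ) (μ : S → ℕ → ℝ)
    (lamS lamI lamR alphaS : ℝ)
    (hβ : ∀ s, 0 < β s)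
    (hμ : ∀ s d, 0 ≤ μ s d) (hμ1 : ∀ s d, μ s d ≤ 1)
    (hlamS : 0 < lamS) (hlamI : 0 < lamI) (hlamR : 0 < lamR)
    (hαS : alphaS ∈ Set.Ioc (0:ℝ) 1)
    (hsummable : ∀ s, Summable fun d : ℕ => (d : ℝ) * μ s d)
    (hsum : ∑ s, ∑' d : ℕ, (d : ℝ) * μ s d = lamS)
    (lam : ℝ) (hlam : lam = lamS + lamI + lamR)
    (f : ℝ → ℝ)
    (hf : ∀ x, f x = lamR / lam +
      alphaS * ∑ s, ∑' d : ℕ, ((d : ℝ) * μ s d / lam) *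
        (x + (1 - x) * Real.exp (-β s)) ^ (d - 1)) :
    ∃! x, x ∈ Set.Ioo (0:ℝ) 1 ∧ f x = x := by
  obtain ⟨hα0, hα1⟩ := hαS
  have hlam_pos : 0 < lam := by rw [hlam]; linarith
  set h : S → ℝ → ℝ := fun s x => x + (1 - x) * Real.exp (-β s) with hh
  set w : S → ℕ → ℝ := fun s d => (d : ℝ) * μ s d / lam with hw
  have hw0 : ∀ s d, 0 ≤ w s d := fun s d =>
    div_nonneg (mul_nonneg (Nat.cast_nonneg d) (hμ s d)) hlam_pos.le
  have hwsum : ∀ s, Summable (w s) := fun s => (hsummable s).div_const lam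
  have hf' : ∀ x, f x = lamR / lam +
      alphaS * ∑ s, ∑' d : ℕ, w s d * (h s x) ^ (d - 1) := by
    intro x
    simp only [hw, hh]
    exact hf x
  have hexp_le : ∀ s, Real.exp (-β s) ≤ 1 := fun s =>
    Real.exp_le_one_iff.2 (by linarith [hβ s])
  have hb0 : ∀ s, ∀ x : ℝ, 0 ≤ x → x ≤ 1 → 0 ≤ h s x := by
    intro s x hx0 hx1
    have := (Real.exp_pos (-β s)).le
    simp only [hh]
    nlinarith
  have hb1 : ∀ s, ∀ x : ℝ, 0 ≤ x → x ≤ 1 → h s x ≤ 1 := by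
    intro s x hx0 hx1
    have := hexp_le s
    have := (Real.exp_pos (-β s)).le
    simp only [hh]
    nlinarith
  have hterm_sum : ∀ s (z : ℝ), 0 ≤ z → z ≤ 1 →
      Summable (fun d => w s d * z ^ (d - 1)) := by
    intro s z hz0 hz1
    refine Summable.of_nonneg_of_le
      (fun d => mul_nonneg (hw0 s d) (pow_nonneg hz0 _)) (fun d => ?_) (hwsum s)
    exact mul_le_of_le_one_right (hw0 s d) (pow_le_one₀ hz0 hz1)
  -- monotonicity of f on [0,1]
  have hmono : ∀ x y : ℝ, 0 ≤ x → x ≤ y → y ≤ 1 → f x ≤ f y := by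
    intro x y hx0 hxy hy1
    rw [hf' x, hf' y]
    have hxmem : (0:ℝ) ≤ x ∧ x ≤ 1 := ⟨hx0, le_trans hxy hy1⟩
    have hymem : (0:ℝ) ≤ y ∧ y ≤ 1 := ⟨le_trans hx0 hxy, hy1⟩
    have key : ∀ s, (∑' d : ℕ, w s d * (h s x) ^ (d - 1)) ≤
        ∑' d : ℕ, w s d * (h s y) ^ (d - 1) := by
      intro s
      refine Summable.tsum_le_tsum (fun d => ?_)
        (hterm_sum s _ (hb0 s x hxmem.1 hxmem.2) (hb1 s x hxmem.1 hxmem.2))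
        (hterm_sum s _ (hb0 s y hymem.1 hymem.2) (hb1 s y hymem.1 hymem.2))
      refine mul_le_mul_of_nonneg_left ?_ (hw0 s d)
      refine pow_le_pow_left₀ (hb0 s x hxmem.1 hxmem.2) ?_ _
      have := Real.exp_pos (-β s)
      have := hexp_le s
      simp only [hh]
      nlinarith
    have : (∑ s, ∑' d : ℕ, w s d * (h s x) ^ (d - 1)) ≤
        ∑ s, ∑' d : ℕ, w s d * (h s y) ^ (d - 1) :=
      Finset.sum_le_sum fun s _ => key s
    nlinarith
  -- convexity of f on [0,1]
  have hconv : ConvexOn ℝ (Set.Icc (0:ℝ) 1) f := by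
    refine ⟨convex_Icc 0 1, ?_⟩
    rintro x ⟨hx0, hx1⟩ y ⟨hy0, hy1⟩ a b ha hb hab
    simp only [smul_eq_mul]
    rw [hf', hf', hf']
    have hbase : ∀ s, h s (a * x + b * y) = a * h s x + b * h s y := by
      intro s
      simp only [hh]
      linear_combination (-(Real.exp (-β s))) * hab
    have key : ∀ s, (∑' d : ℕ, w s d * (h s (a * x + b * y)) ^ (d - 1)) ≤
        a * (∑' d : ℕ, w s d * (h s x) ^ (d - 1)) +
        b * (∑' d : ℕ, w s d * (h s y) ^ (d - 1)) := by
      intro s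
      have hsx := hterm_sum s _ (hb0 s x hx0 hx1) (hb1 s x hx0 hx1)
      have hsy := hterm_sum s _ (hb0 s y hy0 hy1) (hb1 s y hy0 hy1)
      have hcomb : (0:ℝ) ≤ a * x + b * y := by nlinarith
      have hcomb1 : a * x + b * y ≤ 1 := by nlinarith
      have step : (∑' d : ℕ, w s d * (h s (a * x + b * y)) ^ (d - 1)) ≤
          ∑' d : ℕ, (a * (w s d * (h s x) ^ (d - 1)) +
            b * (w s d * (h s y) ^ (d - 1))) := by
        refine Summable.tsum_le_tsum (fun d => ?_)
          (hterm_sum s _ (hb0 s _ hcomb hcomb1) (hb1 s _ hcomb hcomb1))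
          ((hsx.mul_left a).add (hsy.mul_left b))
        have hpow := (convexOn_pow (d - 1)).2 (Set.mem_Ici.2 (hb0 s x hx0 hx1))
          (Set.mem_Ici.2 (hb0 s y hy0 hy1)) ha hb hab
        simp only [smul_eq_mul] at hpow
        rw [hbase s]
        calc w s d * (a * h s x + b * h s y) ^ (d - 1)
            ≤ w s d * (a * (h s x) ^ (d - 1) + b * (h s y) ^ (d - 1)) :=
              mul_le_mul_of_nonneg_left hpow (hw0 s d)
          _ = a * (w s d * (h s x) ^ (d - 1)) + b * (w s d * (h s y) ^ (d - 1)) := by ring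
      rw [Summable.tsum_add (hsx.mul_left a) (hsy.mul_left b), tsum_mul_left, tsum_mul_left] at step
      exact step
    have hsum_le : (∑ s, ∑' d : ℕ, w s d * (h s (a * x + b * y)) ^ (d - 1)) ≤
        a * (∑ s, ∑' d : ℕ, w s d * (h s x) ^ (d - 1)) +
        b * (∑ s, ∑' d : ℕ, w s d * (h s y) ^ (d - 1)) := by
      rw [Finset.mul_sum, Finset.mul_sum, ← Finset.sum_add_distrib]
      exact Finset.sum_le_sum fun s _ => key s
    have hstep := mul_le_mul_of_nonneg_left hsum_le hα0.le
    have heq : a * (lamR / lam + alphaS * ∑ s, ∑' d : ℕ, w s d * (h s x) ^ (d - 1)) +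
        b * (lamR / lam + alphaS * ∑ s, ∑' d : ℕ, w s d * (h s y) ^ (d - 1)) =
        lamR / lam + alphaS * (a * ∑ s, ∑' d : ℕ, w s d * (h s x) ^ (d - 1) +
          b * ∑ s, ∑' d : ℕ, w s d * (h s y) ^ (d - 1)) := by
      linear_combination (lamR / lam) * hab
    linarith
  -- value at 1
  have hf1 : f 1 = lamR / lam + alphaS * (lamS / lam) := by
    rw [hf' 1]
    congr 1
    have : ∀ s, (∑' d : ℕ, w s d * (h s 1) ^ (d - 1)) = (∑' d : ℕ, (d : ℝ) * μ s d) / lam := by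
      intro s
      have h1 : h s 1 = 1 := by simp [hh]
      simp only [h1, one_pow, mul_one]
      exact tsum_div_const
    calc alphaS * ∑ s, ∑' d : ℕ, w s d * (h s 1) ^ (d - 1)
        = alphaS * ∑ s, (∑' d : ℕ, (d : ℝ) * μ s d) / lam := by
          congr 1; exact Finset.sum_congr rfl fun s _ => this s
      _ = alphaS * (lamS / lam) := by rw [← Finset.sum_div, hsum]
  have hf1lt : f 1 < 1 := by
    have h1 : alphaS * (lamS / lam) ≤ lamS / lam :=
      mul_le_of_le_one_left (div_pos hlamS hlam_pos).le hα1
    have h2 : lamR / lam + lamS / lam < 1 := by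
      rw [← add_div, div_lt_one hlam_pos, hlam]; linarith
    rw [hf1]; linarith
  have hf0pos : 0 < f 0 := by
    rw [hf' 0]
    have hts : ∀ s, 0 ≤ ∑' d : ℕ, w s d * (h s 0) ^ (d - 1) := fun s =>
      tsum_nonneg fun d => mul_nonneg (hw0 s d)
        (pow_nonneg (hb0 s 0 le_rfl zero_le_one) _)
    have : (0:ℝ) ≤ ∑ s, ∑' d : ℕ, w s d * (h s 0) ^ (d - 1) :=
      Finset.sum_nonneg fun s _ => hts s
    have hR : 0 < lamR / lam := div_pos hlamR hlam_pos
    nlinarith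
  have hf1pos : 0 < f 1 := by
    rw [hf1]
    have : 0 < lamS / lam := div_pos hlamS hlam_pos
    have : 0 < lamR / lam := div_pos hlamR hlam_pos
    nlinarith [div_pos hlamS hlam_pos]
  -- pick points a0 < b0 in (0,1)
  set b0 : ℝ := (f 1 + 1) / 2 with hb0def
  have hb0f1 : f 1 < b0 := by rw [hb0def]; linarith
  have hb0lt1 : b0 < 1 := by rw [hb0def]; linarith
  have hb0pos : 0 < b0 := by rw [hb0def]; linarith
  set a0 : ℝ := min (f 0) b0 / 2 with ha0def
  have ha0pos : 0 < a0 := by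
    rw [ha0def]; have := lt_min hf0pos hb0pos; linarith
  have ha0ltf0 : a0 < f 0 := by
    rw [ha0def]
    have h1 : min (f 0) b0 ≤ f 0 := min_le_left _ _
    have := lt_min hf0pos hb0pos
    linarith
  have ha0ltb0 : a0 < b0 := by
    rw [ha0def]
    have h1 : min (f 0) b0 ≤ b0 := min_le_right _ _
    have := lt_min hf0pos hb0pos
    linarith
  have hb0le1 : b0 ≤ 1 := hb0lt1.le
  -- g = f - id, convex
  set g : ℝ → ℝ := fun x => f x - x with hg
  have hgconv : ConvexOn ℝ (Set.Icc (0:ℝ) 1) g :=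
    hconv.sub (concaveOn_id (convex_Icc 0 1))
  have hgcont : ContinuousOn g (Set.Icc a0 b0) := by
    have := hgconv.continuousOn_interior
    rw [interior_Icc] at this
    exact this.mono fun z hz => ⟨lt_of_lt_of_le ha0pos hz.1, lt_of_le_of_lt hz.2 hb0lt1⟩
  have hga : 0 < g a0 := by
    have := hmono 0 a0 le_rfl ha0pos.le (by linarith)
    simp only [hg]
    linarith
  have hgb : g b0 < 0 := by
    have := hmono b0 1 hb0pos.le hb0lt1.le le_rfl
    simp only [hg]
    linarith
  -- existence via IVT
  have hIVT := intermediate_value_Icc' ha0ltb0.le hgcont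
  have h0mem : (0:ℝ) ∈ Set.Icc (g b0) (g a0) := ⟨hgb.le, hga.le⟩
  obtain ⟨x, ⟨hxa, hxb⟩, hgx⟩ := hIVT h0mem
  have hxmem : x ∈ Set.Ioo (0:ℝ) 1 :=
    ⟨lt_of_lt_of_le ha0pos hxa, lt_of_le_of_lt hxb hb0lt1⟩
  have hfx : f x = x := by simp only [hg] at hgx; linarith
  -- uniqueness
  have huniq : ∀ u v : ℝ, u ∈ Set.Ioo (0:ℝ) 1 → v ∈ Set.Ioo (0:ℝ) 1 →
      f u = u → f v = v → u < v → False := by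
    intro u v ⟨hu0, hu1⟩ ⟨hv0, hv1⟩ hfu hfv huv
    set a : ℝ := (1 - v) / (1 - u) with hadef
    set b : ℝ := (v - u) / (1 - u) with hbdef
    have hu1' : (0:ℝ) < 1 - u := by linarith
    have ha : 0 ≤ a := div_nonneg (by linarith) hu1'.le
    have hbpos : 0 < b := div_pos (by linarith) hu1'
    have hab : a + b = 1 := by
      rw [hadef, hbdef, ← add_div, div_eq_one_iff_eq (ne_of_gt hu1')]
      ring
    have hcomb : a * u + b * 1 = v := by
      rw [hadef, hbdef]
      field_simp
      ring
    have hkey := hgconv.2 (Set.mem_Icc.2 ⟨hu0.le, hu1.le⟩)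
      (Set.mem_Icc.2 ⟨zero_le_one, le_rfl⟩) ha hbpos.le hab
    simp only [smul_eq_mul, hcomb] at hkey
    have hgu : g u = 0 := by simp only [hg]; linarith
    have hgv : g v = 0 := by simp only [hg]; linarith
    have hg1 : g 1 < 0 := by simp only [hg]; linarith
    rw [hgu, hgv] at hkey
    have hneg : b * g 1 < 0 := mul_neg_of_pos_of_neg hbpos hg1
    linarith
  refine ⟨x, ⟨hxmem, hfx⟩, ?_⟩
  rintro y ⟨hymem, hfy⟩
  rcases lt_trichotomy y x with hlt | heq | hgt
  · exact (huniq y x hymem hxmem hfy hfx hlt).elim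
  · exact heq
  · exact (huniq x y hxmem hymem hfx hfy hgt).elim
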